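/- Equivalent weights under linear measurement models: Suppose a Gaussian mixture prior has N components with means x̄_1,…,x̄_N ∈ ℝⁿ, all sharing the same prior covariance P̄ (so that the prior and posterior innovation covariances S and Ŝ are the same for every component), and prior weights w_1,…,w_N ≥ 0 with at least one w_i > 0. For each component i define the Kalman-updated posterior mean x̂_i = x̄_i + K (y − H x̄_i). Then Ŝ is symmetric positive definite, and for every index i the posterior-linearization weight equals the prior-linearization weight: w_i · N(y; H x̂_i, Ŝ) / (∑_{j=1}^N w_j · N(y; H x̂_j, Ŝ)) = w_i · N(y; H x̄_i, S) / (∑_{j=1}^N w_j · N(y; H x̄_j, S)). -/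

import Mathlib

open Matrix

/-- The Gaussian density `N(z; μ, Σ)` on `ℝᵈ`. -/
noncomputable def gaussPDF {d : ℕ} (z μ : Fin d → ℝ) (Sig : Matrix (Fin d) (Fin d) ℝ) : ℝ :=
  ((2 * Real.pi) ^ d * Sig.det) ^ (-(1 / 2 : ℝ)) *
    Real.exp (-(1 / 2 : ℝ) * ((z - μ) ⬝ᵥ (Sig⁻¹ *ᵥ (z - μ))))

lemma conjT_eq_transpose {k l : ℕ} (A : Matrix (Fin k) (Fin l) ℝ) : Aᴴ = Aᵀ := by
  ext i j; simp [Matrix.conjTranspose_apply]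

lemma dot_shift {k : ℕ} (A B : Matrix (Fin k) (Fin k) ℝ) (v : Fin k → ℝ) :
    (B *ᵥ v) ⬝ᵥ (A *ᵥ (B *ᵥ v)) = v ⬝ᵥ ((Bᵀ * A * B) *ᵥ v) := by
  rw [Matrix.mulVec_mulVec, ← Matrix.vecMul_transpose, Matrix.dotProduct_mulVec,
    Matrix.vecMul_vecMul, Matrix.dotProduct_mulVec, ← Matrix.mul_assoc]

/-- Equivalent weights under linear measurement models: for a Gaussian mixture prior whose
components all share the same prior covariance, the posterior-linearization weights equal
the traditional prior-linearization weights, and the posterior-linearization innovation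
covariance is symmetric positive definite. -/
theorem equivalent_weights_linear
    (n m N : ℕ) (hn : 0 < n) (hm : 0 < m) (hN : 0 < N)
    (H : Matrix (Fin m) (Fin n) ℝ)
    (R : Matrix (Fin m) (Fin m) ℝ) (hR : R.PosDef)
    (Pbar : Matrix (Fin n) (Fin n) ℝ) (hPbar : Pbar.PosDef)
    (y : Fin m → ℝ)
    (xbar : Fin N → (Fin n → ℝ))
    (w : Fin N → ℝ) (hw : ∀ i, 0 ≤ w i) (hw' : ∃ i, 0 < w i)
    (S : Matrix (Fin m) (Fin m) ℝ) (hS : S = H * Pbar * Hᵀ + R)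
    (K : Matrix (Fin n) (Fin m) ℝ) (hK : K = Pbar * Hᵀ * S⁻¹)
    (Phat : Matrix (Fin n) (Fin n) ℝ) (hPhat : Phat = Pbar - K * H * Pbar)
    (Shat : Matrix (Fin m) (Fin m) ℝ)
    (hShat : Shat = H * Phat * Hᵀ + R - H * K * R - (H * K * R)ᵀ)
    (xhat : Fin N → (Fin n → ℝ))
    (hxhat : ∀ i, xhat i = xbar i + K *ᵥ (y - H *ᵥ xbar i)) :
    Shat.PosDef ∧
      ∀ i, w i * gaussPDF y (H *ᵥ xhat i) Shat /
          (∑ j, w j * gaussPDF y (H *ᵥ xhat j) Shat) =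
        w i * gaussPDF y (H *ᵥ xbar i) S /
          (∑ j, w j * gaussPDF y (H *ᵥ xbar j) S) := by
  -- S is positive definite
  have hSpd : S.PosDef := by
    rw [hS]
    refine Matrix.PosDef.posSemidef_add ?_ hR
    have := hPbar.posSemidef.mul_mul_conjTranspose_same H
    rwa [conjT_eq_transpose] at this
  -- determinants are units
  have hRd : IsUnit R.det := hR.det_pos.ne'.isUnit
  have hSd : IsUnit S.det := hSpd.det_pos.ne'.isUnit
  have hRR : R * R⁻¹ = 1 := Matrix.mul_nonsing_inv R hRd
  have hR'R : R⁻¹ * R = 1 := Matrix.nonsing_inv_mul R hRd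
  have hSS : S * S⁻¹ = 1 := Matrix.mul_nonsing_inv S hSd
  have hS'S : S⁻¹ * S = 1 := Matrix.nonsing_inv_mul S hSd
  -- symmetry facts
  have hRt : Rᵀ = R := by rw [← conjT_eq_transpose]; exact hR.isHermitian
  have hPt : Pbarᵀ = Pbar := by rw [← conjT_eq_transpose]; exact hPbar.isHermitian
  have hSt : Sᵀ = S := by rw [← conjT_eq_transpose]; exact hSpd.isHermitian
  have hSit : S⁻¹ᵀ = S⁻¹ := by rw [Matrix.transpose_nonsing_inv, hSt]
  -- H * Pbar * Hᵀ = S - R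
  have hHPH : H * Pbar * Hᵀ = S - R := by rw [hS]; simp
  -- H * K = 1 - R * S⁻¹
  have hHK : H * K = 1 - R * S⁻¹ := by
    rw [hK, ← Matrix.mul_assoc, ← Matrix.mul_assoc, hHPH, Matrix.sub_mul, hSS]
  -- Shat = R * S⁻¹ * R
  have hShat2 : Shat = R * S⁻¹ * R := by
    have hHPhatH : H * Phat * Hᵀ = R - R * S⁻¹ * R := by
      rw [hPhat]
      have expand : H * (Pbar - K * H * Pbar) * Hᵀ
          = H * Pbar * Hᵀ - (H * K) * (H * Pbar * Hᵀ) := by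
        simp only [Matrix.mul_sub, Matrix.sub_mul, Matrix.mul_assoc]
      rw [expand, hHPH, hHK]
      rw [Matrix.sub_mul, Matrix.one_mul, Matrix.mul_sub, Matrix.mul_assoc R S⁻¹ S, hS'S,
        Matrix.mul_one]
      abel
    have hHKR : H * K * R = R - R * S⁻¹ * R := by
      rw [hHK, Matrix.sub_mul, Matrix.one_mul]
    have hHKRt : (H * K * R)ᵀ = R - R * S⁻¹ * R := by
      rw [hHKR, Matrix.transpose_sub, hRt, Matrix.transpose_mul, Matrix.transpose_mul, hRt,
        hSit, Matrix.mul_assoc]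
    rw [hShat, hHPhatH, hHKRt, hHKR]
    abel
  -- Shat is positive definite
  have hShatpd : Shat.PosDef := by
    rw [hShat2]
    refine Matrix.PosDef.of_dotProduct_mulVec_pos ?_ ?_
    · have := Matrix.isHermitian_conjTranspose_mul_mul R hSpd.inv.isHermitian
      rwa [conjT_eq_transpose, hRt] at this
    · intro x hx
      have hRx : R *ᵥ x ≠ 0 := by
        have hinj : Function.Injective (R.mulVec) :=
          Matrix.mulVec_injective_iff_isUnit.mpr hR.isUnit
        intro hc
        exact hx (hinj (by simpa using hc))
      have h2 := hSpd.inv.dotProduct_mulVec_pos hRx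
      rw [star_trivial] at h2 ⊢
      rw [dot_shift S⁻¹ R x, hRt] at h2
      exact h2
  refine ⟨hShatpd, ?_⟩
  -- the quadratic forms agree
  have hquad : ∀ i, (y - H *ᵥ xhat i) ⬝ᵥ (Shat⁻¹ *ᵥ (y - H *ᵥ xhat i))
      = (y - H *ᵥ xbar i) ⬝ᵥ (S⁻¹ *ᵥ (y - H *ᵥ xbar i)) := by
    intro i
    set e : Fin m → ℝ := y - H *ᵥ xbar i with he
    have hres : y - H *ᵥ xhat i = (R * S⁻¹) *ᵥ e := by
      rw [hxhat i, Matrix.mulVec_add, Matrix.mulVec_mulVec, hHK, Matrix.sub_mulVec,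
        Matrix.one_mulVec]
      abel
    have hShatinv : Shat⁻¹ = R⁻¹ * S * R⁻¹ := by
      rw [hShat2, Matrix.mul_inv_rev, Matrix.mul_inv_rev, Matrix.nonsing_inv_nonsing_inv S hSd]
      noncomm_ring
    have hmat : (R * S⁻¹)ᵀ * (R⁻¹ * S * R⁻¹) * (R * S⁻¹) = S⁻¹ := by
      rw [Matrix.transpose_mul, hSit, hRt]
      calc S⁻¹ * R * (R⁻¹ * S * R⁻¹) * (R * S⁻¹)
          = S⁻¹ * ((R * R⁻¹) * S * ((R⁻¹ * R) * S⁻¹)) := by noncomm_ring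
        _ = S⁻¹ := by rw [hRR, hR'R, Matrix.one_mul, Matrix.one_mul, hSS, Matrix.mul_one]
    rw [hres, hShatinv, dot_shift, hmat]
  -- the densities differ by a positive constant
  set c : ℝ := ((2 * Real.pi) ^ m * Shat.det) ^ (-(1 / 2 : ℝ)) /
      ((2 * Real.pi) ^ m * S.det) ^ (-(1 / 2 : ℝ)) with hc
  have hconst_pos : ∀ (A : Matrix (Fin m) (Fin m) ℝ), A.PosDef →
      0 < ((2 * Real.pi) ^ m * A.det) ^ (-(1 / 2 : ℝ)) := by
    intro A hA
    exact Real.rpow_pos_of_pos (mul_pos (pow_pos (by positivity) m) hA.det_pos) _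
  have hcpos : 0 < c := div_pos (hconst_pos _ hShatpd) (hconst_pos _ hSpd)
  have hkey : ∀ i, gaussPDF y (H *ᵥ xhat i) Shat = c * gaussPDF y (H *ᵥ xbar i) S := by
    intro i
    have hbne : ((2 * Real.pi) ^ m * S.det) ^ (-(1 / 2 : ℝ)) ≠ 0 :=
      (hconst_pos _ hSpd).ne'
    rw [gaussPDF, gaussPDF, hquad i, hc, div_mul_eq_mul_div, mul_div_assoc,
      mul_div_cancel_left₀ _ hbne]
  intro i
  rw [hkey i]
  have hsum : ∑ j, w j * gaussPDF y (H *ᵥ xhat j) Shat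
      = c * ∑ j, w j * gaussPDF y (H *ᵥ xbar j) S := by
    rw [Finset.mul_sum]
    exact Finset.sum_congr rfl fun j _ => by rw [hkey j]; ring
  rw [hsum, show w i * (c * gaussPDF y (H *ᵥ xbar i) S)
    = c * (w i * gaussPDF y (H *ᵥ xbar i) S) by ring,
    mul_div_mul_left _ _ hcpos.ne']
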